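/- (Lemma on the score of the oracle target.) Let f_1,…,f_n ∈ ℝ, σ > 0, and suppose β₀ ∈ ℝ^p minimizes β ↦ E_n[(f_i − x_i'β)²] + σ²‖β‖₀/n over ℝ^p, where ‖β‖₀ is the number of nonzero entries of β. Set r_i = f_i − x_i'β₀ and c_s = (E_n[r_i²])^{1/2}, and assume E_n[x_{ij}²] = 1 for every j = 1,…,p. Then max_{1≤j≤p} |E_n[x_{ij}r_i]| ≤ min{σ/√n, c_s}. -/

import Mathlib

open Finset MeasureTheory ProbabilityTheory

namespace SqrtLasso

/-- Empirical average `E_n[h_i] = n⁻¹ ∑ᵢ h i`. -/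
noncomputable def En (n : ℕ) (h : Fin n → ℝ) : ℝ := (∑ i, h i) / n

/-- Euclidean inner product `a'b = ∑ⱼ aⱼ bⱼ`. -/
noncomputable def dot {p : ℕ} (a b : Fin p → ℝ) : ℝ := ∑ j, a j * b j

/-- Prediction norm `‖δ‖_{2,n} = (E_n[(x_i'δ)²])^{1/2}`. -/
noncomputable def predNorm (n : ℕ) {p : ℕ} (x : Fin n → Fin p → ℝ) (δ : Fin p → ℝ) : ℝ :=
  Real.sqrt (En n fun i => (dot (x i) δ) ^ 2)

/-- `ℓ₁` norm of a vector. -/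
noncomputable def l1 {p : ℕ} (v : Fin p → ℝ) : ℝ := ∑ j, |v j|

/-- Restriction `v_S`: equal to `v` on `S` and `0` outside. -/
def restr {p : ℕ} (S : Finset (Fin p)) (v : Fin p → ℝ) : Fin p → ℝ :=
  fun j => if j ∈ S then v j else 0

/-- `Γ v`, i.e. componentwise rescaling by loadings `γ`. -/
noncomputable def scl {p : ℕ} (γ v : Fin p → ℝ) : Fin p → ℝ := fun j => γ j * v j

/-- The support of a vector. -/
noncomputable def supp {p : ℕ} (β : Fin p → ℝ) : Finset (Fin p) := Finset.univ.filter fun j => β j ≠ 0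

/-- The least-squares criterion `Q̂(β) = E_n[(y_i - x_i'β)²]`. -/
noncomputable def Qhat (n : ℕ) {p : ℕ} (x : Fin n → Fin p → ℝ) (y : Fin n → ℝ)
    (β : Fin p → ℝ) : ℝ := En n fun i => (y i - dot (x i) β) ^ 2

/-- The restricted set `Δ_c̄`. -/
def Delta {p : ℕ} (γ : Fin p → ℝ) (T : Finset (Fin p)) (cb : ℝ) : Set (Fin p → ℝ) :=
  {δ | δ ≠ 0 ∧ l1 (scl γ (restr Tᶜ δ)) ≤ cb * l1 (scl γ (restr T δ))}

/-- The restricted eigenvalue `κ_c̄`. -/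
noncomputable def kappa (n : ℕ) {p : ℕ} (x : Fin n → Fin p → ℝ) (γ : Fin p → ℝ)
    (T : Finset (Fin p)) (cb : ℝ) : ℝ :=
  sInf {r | ∃ δ ∈ Delta γ T cb,
    r = Real.sqrt T.card * predNorm n x δ / l1 (scl γ (restr T δ))}

/-- The quantity `κ̃`. -/
noncomputable def kappaTilde (n : ℕ) {p : ℕ} (x : Fin n → Fin p → ℝ) (γ : Fin p → ℝ)
    (T : Finset (Fin p)) : ℝ :=
  sInf {r | ∃ δ : Fin p → ℝ, l1 (scl γ (restr Tᶜ δ)) < l1 (scl γ (restr T δ)) ∧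
    r = Real.sqrt T.card * predNorm n x δ /
      (l1 (scl γ (restr T δ)) - l1 (scl γ (restr Tᶜ δ)))}

/-- The score `S̃ = E_n[x_i(σε_i + r_i)] / √(E_n[(σε_i + r_i)²])`. -/
noncomputable def score (n : ℕ) {p : ℕ} (x : Fin n → Fin p → ℝ) (ε rr : Fin n → ℝ)
    (σ : ℝ) : Fin p → ℝ :=
  fun j => En n (fun i => x i j * (σ * ε i + rr i)) /
    Real.sqrt (En n fun i => (σ * ε i + rr i) ^ 2)

/-- `‖Γ⁻¹ S̃‖_∞ = max_j |S̃_j| / γ_j`. -/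
noncomputable def scoreSup (n : ℕ) {p : ℕ} (x : Fin n → Fin p → ℝ) (ε rr : Fin n → ℝ)
    (σ : ℝ) (γ : Fin p → ℝ) : ℝ :=
  ⨆ j, |score n x ε rr σ j| / γ j

/-- The quantity `ϱ_c̄`. -/
noncomputable def varrho (n : ℕ) {p : ℕ} (x : Fin n → Fin p → ℝ) (γ : Fin p → ℝ)
    (T : Finset (Fin p)) (β₀ : Fin p → ℝ) (S : Fin p → ℝ) (cb : ℝ) : ℝ :=
  sSup {r | ∃ δ ∈ Delta γ T cb, 0 < predNorm n x δ ∧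
    l1 (scl γ (δ + β₀)) ≤ cb * l1 (scl γ β₀) ∧ r = |dot S δ| / predNorm n x δ}

/-- Quadratic form `δ'Mδ`. -/
noncomputable def quadForm {p : ℕ} (M : Fin p → Fin p → ℝ) (δ : Fin p → ℝ) : ℝ :=
  ∑ j, ∑ k, δ j * M j k * δ k

/-- Maximal `m`-sparse eigenvalue `φ_max(m, M)`. -/
noncomputable def phiMax {p : ℕ} (M : Fin p → Fin p → ℝ) (T : Finset (Fin p)) (m : ℕ) : ℝ :=
  sSup {r | ∃ δ : Fin p → ℝ, δ ≠ 0 ∧ (supp δ \ T).card ≤ m ∧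
    r = quadForm M δ / ∑ j, (δ j) ^ 2}

/-- Minimal `m`-sparse eigenvalue `φ_min(m, M)`. -/
noncomputable def phiMin {p : ℕ} (M : Fin p → Fin p → ℝ) (T : Finset (Fin p)) (m : ℕ) : ℝ :=
  sInf {r | ∃ δ : Fin p → ℝ, δ ≠ 0 ∧ (supp δ \ T).card ≤ m ∧
    r = quadForm M δ / ∑ j, (δ j) ^ 2}

/-- Gram matrix `E_n[x_i x_i']`. -/
noncomputable def gram (n : ℕ) {p : ℕ} (x : Fin n → Fin p → ℝ) : Fin p → Fin p → ℝ :=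
  fun j k => En n fun i => x i j * x i k

/-- Rescaled Gram matrix `Γ⁻¹ E_n[x_i x_i'] Γ⁻¹`. -/
noncomputable def rgram (n : ℕ) {p : ℕ} (x : Fin n → Fin p → ℝ) (γ : Fin p → ℝ) :
    Fin p → Fin p → ℝ :=
  fun j k => gram n x j k / (γ j * γ k)

/-- the score of the oracle target satisfies
`max_j |E_n[x_{ij} r_i]| ≤ min { σ/√n, c_s }`. -/
theorem statement_13 (n p : ℕ) (hn : 1 ≤ n) (hp : 1 ≤ p)
    (x : Fin n → Fin p → ℝ) (f : Fin n → ℝ) (σ : ℝ) (hσ : 0 < σ)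
    (β₀ : Fin p → ℝ)
    (horacle : ∀ β : Fin p → ℝ,
      En n (fun i => (f i - dot (x i) β₀) ^ 2) + σ ^ 2 * (supp β₀).card / n ≤
        En n (fun i => (f i - dot (x i) β) ^ 2) + σ ^ 2 * (supp β).card / n)
    (hnorm : ∀ j, En n (fun i => x i j ^ 2) = 1) :
    ∀ j, |En n fun i => x i j * (f i - dot (x i) β₀)| ≤
      min (σ / Real.sqrt n) (Real.sqrt (En n fun i => (f i - dot (x i) β₀) ^ 2)) := by
  intro j
  have hn0 : (0:ℝ) < n := by exact_mod_cast hn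
  set r : Fin n → ℝ := fun i => f i - dot (x i) β₀ with hr
  set a : ℝ := En n (fun i => x i j * r i) with ha
  have hEr : 0 ≤ En n (fun i => r i ^ 2) := by
    unfold En; positivity
  -- Cauchy-Schwarz bound
  have cs : |a| ≤ Real.sqrt (En n fun i => r i ^ 2) := by
    have h2 := Finset.sum_mul_sq_le_sq_mul_sq Finset.univ (fun i => x i j) r
    have hx := hnorm j
    unfold En at hx
    have hxn : (∑ i, x i j ^ 2) = n := by
      field_simp at hx; linarith
    rw [hxn] at h2
    have ha2 : a ^ 2 ≤ En n (fun i => r i ^ 2) := by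
      rw [ha]
      unfold En
      rw [div_pow, div_le_div_iff₀ (by positivity) hn0]
      calc (∑ i, x i j * r i) ^ 2 * n ≤ ((n:ℝ) * ∑ i, r i ^ 2) * n := by
            nlinarith
        _ = (∑ i, r i ^ 2) * (n:ℝ)^2 := by ring
    have := Real.sqrt_le_sqrt ha2
    rwa [Real.sqrt_sq_eq_abs] at this
  -- oracle bound
  have key : a ^ 2 ≤ σ ^ 2 / n := by
    set β : Fin p → ℝ := fun k => β₀ k + if k = j then a else 0 with hβ
    have hdot : ∀ i, dot (x i) β = dot (x i) β₀ + a * x i j := by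
      intro i
      simp only [dot, hβ, mul_add, Finset.sum_add_distrib, mul_ite, mul_zero]
      rw [Finset.sum_ite_eq' Finset.univ j (fun k => x i k * a)]
      simp [mul_comm]
    have hsupp : ((supp β).card : ℝ) ≤ (supp β₀).card + 1 := by
      have hsub : supp β ⊆ insert j (supp β₀) := by
        intro k hk
        simp only [supp, Finset.mem_filter, Finset.mem_univ, true_and] at hk
        by_cases hkj : k = j
        · simp [hkj]
        · have : β k = β₀ k := by simp [hβ, hkj]
          rw [this] at hk
          simp [supp, hk]
      have h1 := Finset.card_le_card hsub
      have h2 := Finset.card_insert_le j (supp β₀)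
      have : (supp β).card ≤ (supp β₀).card + 1 := le_trans h1 h2
      exact_mod_cast this
    have hQ : En n (fun i => (f i - dot (x i) β) ^ 2)
        = En n (fun i => r i ^ 2) - a ^ 2 := by
      have e1 : ∀ i, (f i - dot (x i) β) ^ 2
          = r i ^ 2 - 2 * a * (x i j * r i) + a ^ 2 * x i j ^ 2 := by
        intro i; rw [hdot i]; simp only [hr]; ring
      have hx := hnorm j
      unfold En at hx ⊢
      simp only [e1, Finset.sum_add_distrib, Finset.sum_sub_distrib,
        ← Finset.mul_sum]
      have haa : a * n = ∑ i, x i j * r i := by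
        rw [ha]; unfold En; field_simp
      have hxn : (∑ i, x i j ^ 2) = n := by
        field_simp at hx; linarith
      rw [hxn]
      field_simp
      have h2a : 2 * a * (∑ i, x i j * r i) = 2 * a ^ 2 * n := by
        rw [← haa]; ring
      linarith [h2a]
    have h := horacle β
    rw [hQ] at h
    have hσs : σ ^ 2 * (supp β).card / n ≤ σ ^ 2 * (supp β₀).card / n + σ ^ 2 / n := by
      rw [← add_div, div_le_div_iff₀ hn0 hn0]
      have := mul_le_mul_of_nonneg_left hsupp (by positivity : (0:ℝ) ≤ σ ^ 2)
      nlinarith [this, hn0]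
    nlinarith [h, hσs]
  have hb : |a| ≤ σ / Real.sqrt n := by
    have h1 : |a| = Real.sqrt (a ^ 2) := (Real.sqrt_sq_eq_abs a).symm
    rw [h1]
    have h2 := Real.sqrt_le_sqrt key
    rwa [Real.sqrt_div (sq_nonneg σ), Real.sqrt_sq hσ.le] at h2
  exact le_min hb cs
end SqrtLasso
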